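/- arXiv:2506.00346 — 2 statements merged into one kernel-verified Lean document; each statement's English description precedes it below -/
import Mathlib

section
/- For any matrix B ∈ ℂ^{m×m} and any Hermitian matrix σ ∈ ℂ^{m×m}, one has ‖B σ B†‖₁ ≤ ‖B |σ| B†‖₁, where |σ| := √(σ†σ). -/
open Matrix Set
open scoped ComplexOrder

attribute [local instance] Matrix.normedAddCommGroup Matrix.normedSpace

/-- The square root of a positive semidefinite matrix, as defined in the older Mathlib
(`Matrix.PosSemidef.sqrt`, since removed). -/
noncomputable def Matrix.PosSemidef.sqrt {n 𝕜 : Type*} [Fintype n] [DecidableEq n] [RCLike 𝕜]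
    {A : Matrix n n 𝕜} (hA : A.PosSemidef) : Matrix n n 𝕜 :=
  hA.1.eigenvectorUnitary.1 * diagonal ((↑) ∘ (√·) ∘ hA.1.eigenvalues) *
    (star hA.1.eigenvectorUnitary : Matrix n n 𝕜)

/-- Trace norm: `‖X‖₁ = Tr √(XᴴX)`. -/
noncomputable def traceNorm {m : ℕ} (X : Matrix (Fin m) (Fin m) ℂ) : ℝ :=
  ((Matrix.posSemidef_conjTranspose_mul_self X).sqrt.trace).re

/-- `A(t) = -i H(t) - (1/2) ∑ₖ γₖ(t) Lₖᴴ Lₖ`. -/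
noncomputable def Aop {m K : ℕ} (H : ℝ → Matrix (Fin m) (Fin m) ℂ)
    (L : Fin K → Matrix (Fin m) (Fin m) ℂ) (γ : Fin K → ℝ → ℝ) (t : ℝ) : Matrix (Fin m) (Fin m) ℂ :=
  (-Complex.I) • H t - (1 / 2 : ℂ) • ∑ k, (γ k t : ℂ) • ((L k)ᴴ * L k)


lemma Matrix.PosSemidef.sqrt_eq_cfc' {m : ℕ} {A : Matrix (Fin m) (Fin m) ℂ} (hA : A.PosSemidef) :
    hA.sqrt = cfc Real.sqrt A := by
  rw [hA.1.cfc_eq]; rfl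

open scoped MatrixOrder in
lemma Matrix.PosSemidef.posSemidef_sqrt {m : ℕ} {A : Matrix (Fin m) (Fin m) ℂ} (hA : A.PosSemidef) :
    hA.sqrt.PosSemidef := by
  rw [hA.sqrt_eq_cfc']
  exact (cfc_nonneg (fun x _ => Real.sqrt_nonneg x)).posSemidef

open scoped MatrixOrder in
lemma Matrix.PosSemidef.eq_sqrt_of_sq_eq {m : ℕ} {A : Matrix (Fin m) (Fin m) ℂ} (hA : A.PosSemidef)
    (B : Matrix (Fin m) (Fin m) ℂ) {hB : B.PosSemidef} (hAB : A ^ 2 = B) : A = hB.sqrt := by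
  rw [hB.sqrt_eq_cfc', ← cfcₙ_eq_cfc, ← CFC.sqrt_eq_real_sqrt B hB.nonneg]
  exact (CFC.sqrt_unique (by rw [← hAB, pow_two]) hA.nonneg).symm

lemma aux_sqrt_herm {m : ℕ} {Z : Matrix (Fin m) (Fin m) ℂ} (hZ : Z.IsHermitian) :
    (Matrix.posSemidef_conjTranspose_mul_self Z).sqrt =
      (hZ.eigenvectorUnitary : Matrix (Fin m) (Fin m) ℂ) *
        Matrix.diagonal (fun i => ((|hZ.eigenvalues i| : ℝ) : ℂ)) *
        star (hZ.eigenvectorUnitary : Matrix (Fin m) (Fin m) ℂ) := by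
  set U := (hZ.eigenvectorUnitary : Matrix (Fin m) (Fin m) ℂ) with hU
  have hUsU : star U * U = 1 := (Matrix.mem_unitaryGroup_iff').mp hZ.eigenvectorUnitary.2
  have key : ∀ d : Fin m → ℂ,
      (U * Matrix.diagonal d * star U) * (U * Matrix.diagonal d * star U)
        = U * Matrix.diagonal (fun i => d i * d i) * star U := by
    intro d
    simp only [mul_assoc]
    rw [← mul_assoc (star U) U, hUsU, one_mul, ← mul_assoc (Matrix.diagonal d),
      Matrix.diagonal_mul_diagonal]
  have hN : (U * Matrix.diagonal (fun i => ((|hZ.eigenvalues i| : ℝ) : ℂ)) * star U).PosSemidef := by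
    rw [Matrix.star_eq_conjTranspose]
    refine Matrix.PosSemidef.mul_mul_conjTranspose_same ?_ U
    rw [Matrix.posSemidef_diagonal_iff]
    intro i
    rw [Complex.zero_le_real]
    exact abs_nonneg _
  symm
  apply hN.eq_sqrt_of_sq_eq
  rw [pow_two, key, hZ.eq]
  conv_rhs => rw [hZ.spectral_theorem, Unitary.conjStarAlgAut_apply]
  rw [show ((hZ.eigenvectorUnitary : Matrix (Fin m) (Fin m) ℂ) = U) from rfl]
  rw [show (Matrix.diagonal (RCLike.ofReal ∘ hZ.eigenvalues) : Matrix (Fin m) (Fin m) ℂ)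
      = Matrix.diagonal (fun i => ((hZ.eigenvalues i : ℝ) : ℂ)) from rfl]
  rw [key]
  have hfun : (fun i => ((|hZ.eigenvalues i| : ℝ) : ℂ) * ((|hZ.eigenvalues i| : ℝ) : ℂ))
      = (fun i => ((hZ.eigenvalues i : ℝ) : ℂ) * ((hZ.eigenvalues i : ℝ) : ℂ)) := by
    funext i
    rw [← Complex.ofReal_mul, ← Complex.ofReal_mul, abs_mul_abs_self]
  rw [hfun]

lemma aux_traceNorm_herm {m : ℕ} {Z : Matrix (Fin m) (Fin m) ℂ} (hZ : Z.IsHermitian) :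
    traceNorm Z = ∑ i, |hZ.eigenvalues i| := by
  rw [traceNorm, aux_sqrt_herm hZ, Matrix.trace_mul_comm, ← mul_assoc,
    (Matrix.mem_unitaryGroup_iff').mp hZ.eigenvectorUnitary.2, one_mul, Matrix.trace_diagonal,
    ← Complex.ofReal_sum, Complex.ofReal_re]

lemma aux_traceNorm_psd {m : ℕ} {W : Matrix (Fin m) (Fin m) ℂ} (hW : W.PosSemidef) :
    traceNorm W = W.trace.re := by
  have h : (Matrix.posSemidef_conjTranspose_mul_self W).sqrt = W :=
    (hW.eq_sqrt_of_sq_eq _ (by rw [pow_two, hW.1.eq])).symm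
  rw [traceNorm, h]

lemma aux_diag_entry {m : ℕ} (M : Matrix (Fin m) (Fin m) ℂ) (d : Fin m → ℝ) (i : Fin m) :
    (M * Matrix.diagonal (fun j => ((d j : ℝ) : ℂ)) * Mᴴ) i i
      = ((∑ j, d j * Complex.normSq (M i j) : ℝ) : ℂ) := by
  push_cast
  rw [Matrix.mul_apply]
  refine Finset.sum_congr rfl fun k _ => ?_
  simp only [Matrix.mul_diagonal, Matrix.conjTranspose_apply, ← Complex.mul_conj,
    RCLike.star_def]
  ring

theorem stmt_3 {m : ℕ} (hm : 1 ≤ m)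
    (B σ : Matrix (Fin m) (Fin m) ℂ) (hσ : σ.IsHermitian) :
    traceNorm (B * σ * Bᴴ) ≤
      traceNorm (B * (Matrix.posSemidef_conjTranspose_mul_self σ).sqrt * Bᴴ) := by
  have hZ : (B * σ * Bᴴ).IsHermitian := Matrix.isHermitian_mul_mul_conjTranspose B hσ
  set U := (hZ.eigenvectorUnitary : Matrix (Fin m) (Fin m) ℂ) with hUdef
  set V := (hσ.eigenvectorUnitary : Matrix (Fin m) (Fin m) ℂ) with hVdef
  have hUsU : star U * U = 1 := (Matrix.mem_unitaryGroup_iff').mp hZ.eigenvectorUnitary.2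
  have hUUs : U * star U = 1 := (Matrix.mem_unitaryGroup_iff).mp hZ.eigenvectorUnitary.2
  have hVsV : star V * V = 1 := (Matrix.mem_unitaryGroup_iff').mp hσ.eigenvectorUnitary.2
  set M := star U * B * V with hMdef
  set μ := hσ.eigenvalues with hμdef
  set lam := hZ.eigenvalues with hlamdef
  -- key computations
  have hσdecomp : σ = V * Matrix.diagonal (fun j => ((μ j : ℝ) : ℂ)) * star V := by
    conv_lhs => rw [hσ.spectral_theorem]
    rfl
  have habs : (Matrix.posSemidef_conjTranspose_mul_self σ).sqrt
      = V * Matrix.diagonal (fun j => ((|μ j| : ℝ) : ℂ)) * star V := aux_sqrt_herm hσ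
  have hconj : ∀ d : Fin m → ℝ,
      star U * (B * (V * Matrix.diagonal (fun j => ((d j : ℝ) : ℂ)) * star V) * Bᴴ) * U
        = M * Matrix.diagonal (fun j => ((d j : ℝ) : ℂ)) * Mᴴ := by
    intro d
    have hMH : Mᴴ = star V * (Bᴴ * U) := by
      rw [← Matrix.star_eq_conjTranspose, hMdef]
      simp only [StarMul.star_mul, star_star, Matrix.star_eq_conjTranspose B, mul_assoc]
    rw [hMH]
    simp only [hMdef, mul_assoc]
  -- eigenvalues of Z via M
  have hdiag : Matrix.diagonal (fun i => ((lam i : ℝ) : ℂ))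
      = M * Matrix.diagonal (fun j => ((μ j : ℝ) : ℂ)) * Mᴴ := by
    rw [← hconj μ, ← hσdecomp]
    have h := hZ.conjStarAlgAut_star_eigenvectorUnitary
    rw [Unitary.conjStarAlgAut_apply, Unitary.coe_star, star_star] at h
    exact h.symm
  have hlam_eq : ∀ i, lam i = ∑ j, μ j * Complex.normSq (M i j) := by
    intro i
    have := congrFun (congrFun hdiag i) i
    rw [aux_diag_entry M μ i, Matrix.diagonal_apply_eq] at this
    exact_mod_cast this
  -- trace of W
  set W := B * (Matrix.posSemidef_conjTranspose_mul_self σ).sqrt * Bᴴ with hWdef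
  have hWpsd : W.PosSemidef := by
    rw [hWdef]
    exact ((Matrix.posSemidef_conjTranspose_mul_self σ).posSemidef_sqrt).mul_mul_conjTranspose_same B
  have hcyc : (star U * W * U).trace = W.trace := by
    rw [Matrix.trace_mul_comm, ← mul_assoc, hUUs, one_mul]
  have htrW : W.trace = Matrix.trace (M * Matrix.diagonal (fun j => ((|μ j| : ℝ) : ℂ)) * Mᴴ) := by
    rw [← hconj (fun j => |μ j|), ← habs]
    exact hcyc.symm
  have htrW' : W.trace.re = ∑ i, ∑ j, |μ j| * Complex.normSq (M i j) := by
    rw [htrW, Matrix.trace]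
    simp only [Matrix.diag_apply, aux_diag_entry M (fun j => |μ j|)]
    rw [← Complex.ofReal_sum, Complex.ofReal_re]
  rw [aux_traceNorm_herm hZ, aux_traceNorm_psd hWpsd, htrW']
  refine Finset.sum_le_sum fun i _ => ?_
  rw [show hZ.eigenvalues i = lam i from rfl, hlam_eq i]
  calc |∑ j, μ j * Complex.normSq (M i j)| ≤ ∑ j, |μ j * Complex.normSq (M i j)| :=
        Finset.abs_sum_le_sum_abs _ _
    _ = ∑ j, |μ j| * Complex.normSq (M i j) := by
        refine Finset.sum_congr rfl fun j _ => ?_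
        rw [abs_mul, abs_of_nonneg (Complex.normSq_nonneg _)]
end

section
/- For every τ > 0, every n, and every Hermitian positive semidefinite matrix ρ ∈ ℂ^{m×m}, the one-step FREM output Φ(t_n, ρ) is Hermitian and positive semidefinite. -/
open Matrix Set
open scoped ComplexOrder

attribute [local instance] Matrix.normedAddCommGroup Matrix.normedSpace

/-- Forward full-rank exponential midpoint one-step map `Φ(tₙ, ρ)`. -/
noncomputable def Phi {m K : ℕ} (H : ℝ → Matrix (Fin m) (Fin m) ℂ)
    (L : Fin K → Matrix (Fin m) (Fin m) ℂ) (γ : Fin K → ℝ → ℝ) (τ tn : ℝ) (ρ : Matrix (Fin m) (Fin m) ℂ) : Matrix (Fin m) (Fin m) ℂ :=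
  NormedSpace.exp (τ • Aop H L γ (tn + τ / 2)) * ρ *
      NormedSpace.exp (τ • (Aop H L γ (tn + τ / 2))ᴴ) +
    (τ : ℂ) • ∑ k, (γ k (tn + τ / 2) : ℂ) •
      (NormedSpace.exp ((τ / 2) • Aop H L γ (tn + τ / 2)) * L k *
        (NormedSpace.exp ((τ / 2) • Aop H L γ tn) *
          (ρ + (τ / 2 : ℂ) • ∑ j, (γ j tn : ℂ) • (L j * ρ * (L j)ᴴ)) *
          NormedSpace.exp ((τ / 2) • (Aop H L γ tn)ᴴ)) * (L k)ᴴ *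
        NormedSpace.exp ((τ / 2) • (Aop H L γ (tn + τ / 2))ᴴ))



private lemma smul_psd {m : ℕ} {A : Matrix (Fin m) (Fin m) ℂ} (hA : A.PosSemidef)
    {c : ℝ} (hc : 0 ≤ c) : ((c : ℂ) • A).PosSemidef := by
  refine ⟨?_, fun x => ?_⟩
  · unfold Matrix.IsHermitian
    rw [Matrix.conjTranspose_smul, hA.1.eq]
    simp [Complex.conj_ofReal]
  · have e : (x.sum fun i xi => x.sum fun j xj => star xi * ((c : ℂ) • A) i j * xj) =
        (c : ℂ) * x.sum fun i xi => x.sum fun j xj => star xi * A i j * xj := by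
      simp only [Finsupp.mul_sum, Matrix.smul_apply, smul_eq_mul]
      refine Finset.sum_congr rfl fun i _ => Finset.sum_congr rfl fun j _ => ?_
      ring
    rw [e]
    exact mul_nonneg (by exact_mod_cast hc) (hA.2 x)

private lemma sum_psd {m K : ℕ} (f : Fin K → Matrix (Fin m) (Fin m) ℂ)
    (hf : ∀ k, (f k).PosSemidef) : (∑ k, f k).PosSemidef :=
  Finset.sum_induction f _ (fun _ _ ha hb => ha.add hb) Matrix.PosSemidef.zero
    (fun k _ => hf k)

theorem stmt_7 {m K : ℕ} (hm : 1 ≤ m) (hK : 1 ≤ K)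
    (H : ℝ → Matrix (Fin m) (Fin m) ℂ) (hH : ∀ t, (H t).IsHermitian)
    (L : Fin K → Matrix (Fin m) (Fin m) ℂ)
    (γ : Fin K → ℝ → ℝ) (hγc : ∀ k, Continuous (γ k)) (hγ : ∀ k t, 0 ≤ γ k t)
    (T : ℝ) (hT : 0 < T)
    (τ : ℝ) (hτ : 0 < τ) (n : ℕ)
    (ρ : Matrix (Fin m) (Fin m) ℂ) (hρ : ρ.PosSemidef) :
    (Phi H L γ τ ((n : ℝ) * τ) ρ).PosSemidef := by
  classical
  set tn : ℝ := (n : ℝ) * τ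
  set A1 := Aop H L γ (tn + τ / 2)
  set A0 := Aop H L γ tn
  have hexp : ∀ (c : ℝ) (A : Matrix (Fin m) (Fin m) ℂ),
      NormedSpace.exp (c • Aᴴ) = (NormedSpace.exp (c • A))ᴴ := by
    intro c A
    rw [← Matrix.exp_conjTranspose]
    congr 1
    rw [Matrix.conjTranspose_smul]
    simp
  have hρh : (ρ + (τ / 2 : ℂ) • ∑ j, (γ j tn : ℂ) • (L j * ρ * (L j)ᴴ)).PosSemidef := by
    have : ((τ / 2 : ℝ) : ℂ) = (τ / 2 : ℂ) := by push_cast; ring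
    rw [← this]
    refine hρ.add (smul_psd (sum_psd _ fun j => smul_psd
      (hρ.mul_mul_conjTranspose_same (L j)) (hγ j tn)) (by positivity))
  unfold Phi
  refine Matrix.PosSemidef.add ?_ ?_
  · rw [hexp]
    exact hρ.mul_mul_conjTranspose_same _
  · have : ((τ : ℝ) : ℂ) = (τ : ℂ) := rfl
    refine smul_psd (sum_psd _ fun k => smul_psd ?_ (hγ k _)) hτ.le
    rw [hexp, hexp]
    have := (hρh.mul_mul_conjTranspose_same (NormedSpace.exp ((τ / 2) • A0)))
    have h2 := this.mul_mul_conjTranspose_same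
      (NormedSpace.exp ((τ / 2) • A1) * L k)
    simpa [Matrix.conjTranspose_mul, mul_assoc] using h2
end
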